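/- For a discrete-time time-varying linear system x(k+1) = A(k)x(k) + B(k)u(k) on k = 0,...,N, the terminal state ξ is reachable at time N+1 from the initial state x (i.e., there exists a control sequence u(0),...,u(N) steering x(0)=x to x(N+1)=ξ) if and only if ξ - Φ_A x lies in the range of the reachability Gramian G₁ = Σ_{k=0}^{N} Φ_{k+1} B(k) B(k)' Φ_{k+1}', where Φ_A = A(N)···A(0) and Φ_{k+1} = A(N)···A(k+1) (with Φ_{N+1} = I). -/

import Mathlib

open Matrix

/-- `transMat A N k` is the product `A(N) * A(N-1) * ⋯ * A(k)` for `k ≤ N`,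
and the identity matrix for `k > N`. -/
noncomputable def transMat {n : ℕ} (A : ℕ → Matrix (Fin n) (Fin n) ℝ) (N : ℕ) (k : ℕ) :
    Matrix (Fin n) (Fin n) ℝ :=
  if _ : k ≤ N then transMat A N (k + 1) * A k else 1
termination_by N + 1 - k
decreasing_by omega

lemma transMat_of_gt {n : ℕ} (A : ℕ → Matrix (Fin n) (Fin n) ℝ) {N k : ℕ} (h : N < k) :
    transMat A N k = 1 := by
  rw [transMat]; simp [Nat.not_le.mpr h]

lemma transMat_of_le {n : ℕ} (A : ℕ → Matrix (Fin n) (Fin n) ℝ) {N k : ℕ} (h : k ≤ N) :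
    transMat A N k = transMat A N (k + 1) * A k := by
  rw [transMat]; simp [h]

lemma transMat_succ_left {n : ℕ} (A : ℕ → Matrix (Fin n) (Fin n) ℝ) (N : ℕ) :
    ∀ k, k ≤ N + 1 → transMat A (N + 1) k = A (N + 1) * transMat A N k := by
  intro k hk
  induction' hd : N + 1 - k with d ih generalizing k
  · have hk' : k = N + 1 := by omega
    subst hk'
    rw [transMat_of_le A (le_refl (N + 1)), transMat_of_gt A (by omega),
      transMat_of_gt A (by omega), Matrix.one_mul, Matrix.mul_one]
  · have h : k ≤ N := by omega
    rw [transMat_of_le A (by omega : k ≤ N + 1), transMat_of_le A h,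
      ih (k + 1) (by omega) (by omega), Matrix.mul_assoc]

/-- Variation of constants formula. -/
lemma state_formula {n m : ℕ} (A : ℕ → Matrix (Fin n) (Fin n) ℝ)
    (B : ℕ → Matrix (Fin n) (Fin m) ℝ) :
    ∀ (N : ℕ) (x : ℕ → Fin n → ℝ) (u : ℕ → Fin m → ℝ),
      (∀ k ≤ N, x (k + 1) = A k *ᵥ x k + B k *ᵥ u k) →
      x (N + 1) = transMat A N 0 *ᵥ x 0 +
        ∑ k ∈ Finset.range (N + 1), (transMat A N (k + 1) * B k) *ᵥ u k := by
  intro N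
  induction' N with N ih
  · intro x u h
    rw [h 0 le_rfl, transMat_of_le A le_rfl]
    simp [transMat_of_gt A (Nat.lt_succ_self 0)]
  · intro x u h
    have hx : x (N + 1 + 1) = A (N + 1) *ᵥ x (N + 1) + B (N + 1) *ᵥ u (N + 1) :=
      h (N + 1) le_rfl
    rw [hx, ih x u (fun k hk => h k (by omega))]
    rw [Finset.sum_range_succ (n := N + 1)]
    have h1 : transMat A (N + 1) 0 = A (N + 1) * transMat A N 0 :=
      transMat_succ_left A N 0 (by omega)
    have h2 : transMat A (N + 1) (N + 1 + 1) * B (N + 1) = B (N + 1) := by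
      rw [transMat_of_gt A (by omega), Matrix.one_mul]
    have hsum : A (N + 1) *ᵥ (∑ k ∈ Finset.range (N + 1), (transMat A N (k + 1) * B k) *ᵥ u k)
        = ∑ k ∈ Finset.range (N + 1), (transMat A (N + 1) (k + 1) * B k) *ᵥ u k := by
      rw [show A (N + 1) *ᵥ (∑ k ∈ Finset.range (N + 1), (transMat A N (k + 1) * B k) *ᵥ u k)
          = (A (N + 1)).mulVecLin (∑ k ∈ Finset.range (N + 1),
              (transMat A N (k + 1) * B k) *ᵥ u k) from rfl, map_sum]
      refine Finset.sum_congr rfl fun k hk => ?_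
      rw [Finset.mem_range] at hk
      rw [Matrix.mulVecLin_apply, Matrix.mulVec_mulVec, ← Matrix.mul_assoc,
        ← transMat_succ_left A N (k + 1) (by omega)]
    rw [h1, h2, Matrix.mulVec_add, hsum, Matrix.mulVec_mulVec]
    abel

/-- Range of `M * Mᵀ` equals range of `M` over the reals. -/
lemma range_mul_transpose {n : ℕ} {p : Type*} [Fintype p] (M : Matrix (Fin n) p ℝ) :
    LinearMap.range (M * Mᵀ).mulVecLin = LinearMap.range M.mulVecLin := by
  have hle : LinearMap.range (M * Mᵀ).mulVecLin ≤ LinearMap.range M.mulVecLin := by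
    rintro y ⟨v, rfl⟩
    exact ⟨Mᵀ *ᵥ v, by rw [Matrix.mulVecLin_apply, Matrix.mulVecLin_apply, Matrix.mulVec_mulVec]⟩
  have hrank : (M * Mᵀ).rank = M.rank := Matrix.rank_self_mul_transpose M
  exact Submodule.eq_of_le_of_finrank_eq hle hrank

open Fin.NatCast in
/-- The key linear-algebra fact: `y` is in the image of `u ↦ ∑ M k *ᵥ u k` iff
`y` is in the range of the Gramian `∑ M k * (M k)ᵀ`. -/
lemma sum_image_iff_gramian {n m N : ℕ} (M : ℕ → Matrix (Fin n) (Fin m) ℝ) (y : Fin n → ℝ) :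
    (∃ u : ℕ → Fin m → ℝ, ∑ k ∈ Finset.range (N + 1), M k *ᵥ u k = y)
    ↔ ∃ ζ : Fin n → ℝ, (∑ k ∈ Finset.range (N + 1), M k * (M k)ᵀ) *ᵥ ζ = y := by
  set L : Matrix (Fin n) (Fin (N + 1) × Fin m) ℝ :=
    Matrix.of fun i p => M p.1 i p.2 with hL
  have hLmul : ∀ v : Fin (N + 1) × Fin m → ℝ,
      L *ᵥ v = ∑ k ∈ Finset.range (N + 1), M k *ᵥ (fun a => v (k, a)) := by
    intro v
    funext i
    simp only [Matrix.mulVec, dotProduct, Finset.sum_apply, hL, Matrix.of_apply]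
    rw [Fintype.sum_prod_type,
      ← Fin.sum_univ_eq_sum_range (fun k => ∑ a : Fin m, M k i a * v (↑k, a)) (N + 1)]
    refine Finset.sum_congr rfl fun a _ => Finset.sum_congr rfl fun b _ => ?_
    simp
  have hGram : L * Lᵀ = ∑ k ∈ Finset.range (N + 1), M k * (M k)ᵀ := by
    ext i j
    simp only [Matrix.mul_apply, Matrix.transpose_apply, Matrix.sum_apply, hL, Matrix.of_apply]
    rw [Fintype.sum_prod_type,
      ← Fin.sum_univ_eq_sum_range (fun k => ∑ b : Fin m, M k i b * M k j b) (N + 1)]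
  constructor
  · rintro ⟨u, hu⟩
    have hy : y ∈ LinearMap.range L.mulVecLin := by
      refine ⟨fun p => u p.1 p.2, ?_⟩
      rw [Matrix.mulVecLin_apply, hLmul, ← hu]
      refine Finset.sum_congr rfl fun k hk => ?_
      rw [Finset.mem_range] at hk
      simp only [Fin.val_cast_of_lt hk]
    rw [← range_mul_transpose L, hGram] at hy
    obtain ⟨ζ, hζ⟩ := hy
    exact ⟨ζ, hζ⟩
  · rintro ⟨ζ, hζ⟩
    have hy : y ∈ LinearMap.range L.mulVecLin := by
      rw [← range_mul_transpose L, hGram]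
      exact ⟨ζ, hζ⟩
    obtain ⟨v, hv⟩ := hy
    rw [Matrix.mulVecLin_apply, hLmul] at hv
    exact ⟨fun k a => v ((k : Fin (N + 1)), a), hv⟩

/-- The terminal state `ξ` is reachable at time `N+1` from `x0` iff
`ξ - Φ_A x0` lies in the range of the reachability Gramian `G₁`. -/
theorem reachability_criterion {n m N : ℕ}
    (A : ℕ → Matrix (Fin n) (Fin n) ℝ) (B : ℕ → Matrix (Fin n) (Fin m) ℝ)
    (x0 ξ : Fin n → ℝ) :
    (∃ (x : ℕ → Fin n → ℝ) (u : ℕ → Fin m → ℝ),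
        x 0 = x0 ∧ (∀ k ≤ N, x (k + 1) = A k *ᵥ x k + B k *ᵥ u k) ∧ x (N + 1) = ξ)
      ↔ ∃ ζ : Fin n → ℝ,
        (∑ k ∈ Finset.range (N + 1),
            transMat A N (k + 1) * B k * (B k)ᵀ * (transMat A N (k + 1))ᵀ) *ᵥ ζ
          = ξ - transMat A N 0 *ᵥ x0 := by
  have key := sum_image_iff_gramian (N := N) (fun k => transMat A N (k + 1) * B k)
    (ξ - transMat A N 0 *ᵥ x0)
  have hG : ∑ k ∈ Finset.range (N + 1),
      (transMat A N (k + 1) * B k) * (transMat A N (k + 1) * B k)ᵀ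
      = ∑ k ∈ Finset.range (N + 1),
      transMat A N (k + 1) * B k * (B k)ᵀ * (transMat A N (k + 1))ᵀ := by
    refine Finset.sum_congr rfl fun k _ => ?_
    rw [Matrix.transpose_mul, ← Matrix.mul_assoc]
  rw [hG] at key
  rw [← key]
  constructor
  · rintro ⟨x, u, hx0, hrec, hxN⟩
    refine ⟨u, ?_⟩
    have := state_formula A B N x u hrec
    rw [hx0, hxN] at this
    rw [this]
    abel
  · rintro ⟨u, hu⟩
    set x : ℕ → Fin n → ℝ := fun k => Nat.rec x0 (fun k xk => A k *ᵥ xk + B k *ᵥ u k) k with hx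
    refine ⟨x, u, rfl, fun k _ => rfl, ?_⟩
    have hform := state_formula A B N x u (fun k _ => rfl)
    have hx0 : x 0 = x0 := rfl
    rw [hform, hu, hx0]
    abel
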